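/- Let n and d be positive integers and let F ∈ (ℂ^n)^{⊗d} be a symmetric tensor with corresponding degree-d polynomial p_F. Then π(Ann(F)_𝟏) ⊆ Ann(p_F)_d, i.e., the image under π of the multidegree-(1,…,1) component of the apolar ideal of F is contained in the degree-d component of the apolar ideal of p_F. -/

import Mathlib

/-!
Common setup, following the paper "On the abundance of minimal border rank symmetric
tensors verifying Comon's conjecture".

* `S = ℂ[α_{i,j} : 1 ≤ i ≤ d, 1 ≤ j ≤ n]` is modeled as `MvPolynomial (Fin d × Fin n) ℂ`,
  with the `ℤ^d`-grading in which `deg α_{i,j} = e_i`; `Scomp n d u` is the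
  multidegree-`u` component (`u : Fin d → ℕ`).
* `V = ℂ[β_1,…,β_n]` is modeled as `MvPolynomial (Fin n) ℂ` with its standard grading;
  `Vcomp n N` is the degree-`N` component.
* The graded duals `T` and `P` are modeled by the same polynomial rings, with `S`
  (resp. `V`) acting by differentiation (`apolar`); `ann F` is the apolar
  (annihilator) ideal of `F`.
* A tensor `F ∈ (ℂ^n)^{⊗d}` is an element of the multidegree-`(1,…,1)` component
  `Scomp n d (fun _ => 1)` (a multilinear form in the `x_{i,j}`).
-/

open MvPolynomial Submodule Module

noncomputable section

namespace BorderComon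

/-- the multidegree-`u` graded component of `S`. -/
def Scomp (n d : ℕ) (u : Fin d → ℕ) : Submodule ℂ (MvPolynomial (Fin d × Fin n) ℂ) :=
  weightedHomogeneousSubmodule ℂ (fun p : Fin d × Fin n => Pi.single p.1 1) u

/-- the degree-`N` graded component of `V`. -/
def Vcomp (n : ℕ) (N : ℕ) : Submodule ℂ (MvPolynomial (Fin n) ℂ) :=
  homogeneousSubmodule (Fin n) ℂ N

/-- the diagonal ring map `π : S → V`, `α_{i,j} ↦ β_j`. -/
def piAlg (n d : ℕ) : MvPolynomial (Fin d × Fin n) ℂ →ₐ[ℂ] MvPolynomial (Fin n) ℂ :=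
  aeval (fun p : Fin d × Fin n => X p.2)

/-- `π` as a `ℂ`-linear map. -/
def piL (n d : ℕ) : MvPolynomial (Fin d × Fin n) ℂ →ₗ[ℂ] MvPolynomial (Fin n) ℂ :=
  (piAlg n d).toLinearMap

/-- the ring map `ρ : S → V`, `α_{1,j} ↦ β_j` and `α_{i,j} ↦ 0` for `i ≥ 2`
(rows are `0`-indexed, so the first row is row `0`). -/
def rho (n d : ℕ) : MvPolynomial (Fin d × Fin n) ℂ →ₐ[ℂ] MvPolynomial (Fin n) ℂ :=
  aeval (fun p : Fin d × Fin n => if (p.1 : ℕ) = 0 then X p.2 else 0)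

/-- the result of differentiating `F` by the monomial `X^a`:
`∂^a X^b = (∏_i b_i!/(b_i-a_i)!) X^{b-a}` (and `= 0` unless `a ≤ b`, which is
automatic since the descending factorial vanishes there). -/
def diffMon {σ : Type*} (a : σ →₀ ℕ) (F : MvPolynomial σ ℂ) : MvPolynomial σ ℂ :=
  ∑ b ∈ F.support, (F.coeff b * ∏ i ∈ a.support, ((b i).descFactorial (a i) : ℂ)) •
    monomial (b - a) (1 : ℂ)

/-- the apolarity action: `apolar F ψ = ψ ∘ F` is the result of letting `ψ` act on `F`
by differentiation, linearly in `ψ`. -/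
def apolar {σ : Type*} (F : MvPolynomial σ ℂ) : MvPolynomial σ ℂ →ₗ[ℂ] MvPolynomial σ ℂ :=
  Finsupp.lsum ℂ (fun a : σ →₀ ℕ => LinearMap.toSpanSingleton ℂ _ (diffMon a F)) ∘ₗ
    (AddMonoidAlgebra.coeffLinearEquiv ℂ : MvPolynomial σ ℂ ≃ₗ[ℂ] (σ →₀ ℕ) →₀ ℂ).toLinearMap

/-- the apolar (annihilator) ideal `Ann(F) = {ψ : ψ ∘ F = 0}`, as a subspace. -/
def ann {σ : Type*} (F : MvPolynomial σ ℂ) : Submodule ℂ (MvPolynomial σ ℂ) :=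
  LinearMap.ker (apolar F)

/-- the ideal `I_R ⊆ S` generated by the `2×2` minors
`α_{i,j} α_{k,ℓ} − α_{i,ℓ} α_{k,j}`, `i < k`, `j < ℓ`. -/
def IR (n d : ℕ) : Ideal (MvPolynomial (Fin d × Fin n) ℂ) :=
  Ideal.span {q | ∃ i k : Fin d, ∃ j l : Fin n, i < k ∧ j < l ∧
    q = X (i, j) * X (k, l) - X (i, l) * X (k, j)}

/-- `J ⊆ S` is a (multigraded) homogeneous ideal: it is the sum of its
multigraded components. -/
def IsHomogS (n d : ℕ) (J : Ideal (MvPolynomial (Fin d × Fin n) ℂ)) : Prop :=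
  Submodule.restrictScalars ℂ J = ⨆ u : Fin d → ℕ, (Submodule.restrictScalars ℂ J ⊓ Scomp n d u)

/-- `I ⊆ V` is a homogeneous ideal: it is the sum of its graded components. -/
def IsHomogV (n : ℕ) (I : Ideal (MvPolynomial (Fin n) ℂ)) : Prop :=
  Submodule.restrictScalars ℂ I = ⨆ N : ℕ, (Submodule.restrictScalars ℂ I ⊓ Vcomp n N)

/-- the exponent redistribution underlying `ψ_u`: in the sorted list
`i_1 ≤ ⋯ ≤ i_N` of the indices of the monomial `β^γ` (value `j` occurring `γ j`
times, `N = |γ|`), row `i` receives the block of positions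
`[∑_{i'<i} u i', ∑_{i'≤i} u i')`, while value `j` occupies positions
`[∑_{j'<j} γ j', ∑_{j'≤j} γ j')`; hence the exponent of `α_{i,j}` is the size of
the intersection of these two intervals. -/
def distrib (n d : ℕ) (u : Fin d → ℕ) (γ : Fin n →₀ ℕ) : (Fin d × Fin n) →₀ ℕ :=
  Finsupp.equivFunOnFinite.symm fun p : Fin d × Fin n =>
    min (∑ i ∈ Finset.univ.filter fun i : Fin d => (i : ℕ) ≤ (p.1 : ℕ), u i)
        (∑ j ∈ Finset.univ.filter fun j : Fin n => (j : ℕ) ≤ (p.2 : ℕ), γ j)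
    - max (∑ i ∈ Finset.univ.filter fun i : Fin d => (i : ℕ) < (p.1 : ℕ), u i)
          (∑ j ∈ Finset.univ.filter fun j : Fin n => (j : ℕ) < (p.2 : ℕ), γ j)

/-- the linear map `ψ_u : V → S` sending a monomial `β_{i_1} β_{i_2} ⋯ β_{i_N}`
with `i_1 ≤ i_2 ≤ ⋯ ≤ i_N` to
`(α_{1,i_1} ⋯ α_{1,i_{u_1}}) (α_{2,i_{u_1+1}} ⋯ α_{2,i_{u_1+u_2}}) ⋯`.
(Its restriction to `Vcomp n (∑ i, u i)` is the map `ψ_u : V_{|u|} → S_u` of the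
paper.) -/
def psi (n d : ℕ) (u : Fin d → ℕ) :
    MvPolynomial (Fin n) ℂ →ₗ[ℂ] MvPolynomial (Fin d × Fin n) ℂ :=
  AddMonoidAlgebra.mapDomainLinearMap ℂ ℂ (distrib n d u)

/-- `Υ(I) = I_R + ∑_{u} ψ_u(I_{|u|}) ⊆ S`. -/
def Upsilon (n d : ℕ) (I : Ideal (MvPolynomial (Fin n) ℂ)) :
    Submodule ℂ (MvPolynomial (Fin d × Fin n) ℂ) :=
  restrictScalars ℂ (IR n d) ⊔
    ⨆ u : Fin d → ℕ, Submodule.map (psi n d u) (restrictScalars ℂ I ⊓ Vcomp n (∑ i, u i))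

/-- the irrelevant ideal `B_X = ∏_{i=1}^d (α_{i,1},…,α_{i,n}) ⊆ S`. -/
def BX (n d : ℕ) : Ideal (MvPolynomial (Fin d × Fin n) ℂ) :=
  ∏ i : Fin d, Ideal.span (Set.range fun j : Fin n => X (i, j))

/-- the irrelevant ideal `B_Y = (β_1,…,β_n) ⊆ V`. -/
def BY (n : ℕ) : Ideal (MvPolynomial (Fin n) ℂ) :=
  Ideal.span (Set.range X)

/-- `Σ(J) = ⊕_{a ≥ 0} ⊕_{s ∈ ℰ} π(J_{a𝟏+s}) ⊆ V`, where
`ℰ = {0, e_1, e_1+e_2, …, e_1+⋯+e_{d-1}}` (the element `s` with `m` ones is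
`fun i => if i < m then 1 else 0`). -/
def SigmaMap (n d : ℕ) (J : Ideal (MvPolynomial (Fin d × Fin n) ℂ)) :
    Submodule ℂ (MvPolynomial (Fin n) ℂ) :=
  ⨆ a : ℕ, ⨆ m : Fin d, Submodule.map (piL n d)
    (restrictScalars ℂ J ⊓ Scomp n d (fun i => a + if (i : ℕ) < (m : ℕ) then 1 else 0))

/-- the set of tensors of rank at most `r`: sums of `r` decomposable tensors
`v_1 ⊗ ⋯ ⊗ v_d = ∏_i (∑_j v_i(j) x_{i,j})`. -/
def rankLE (n d r : ℕ) : Set (MvPolynomial (Fin d × Fin n) ℂ) :=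
  {F | ∃ v : Fin r → Fin d → Fin n → ℂ,
    F = ∑ s : Fin r, ∏ i : Fin d, ∑ j : Fin n, C (v s i j) * X (i, j)}

/-- `F` has border rank at most `r`: coefficientwise (finitely many coefficients are
involved), `F` lies in the closure of the set of tensors of rank at most `r`. -/
def brkLE (n d : ℕ) (F : MvPolynomial (Fin d × Fin n) ℂ) (r : ℕ) : Prop :=
  (fun m => coeff m F) ∈ closure ((fun G => fun m => coeff m G) '' rankLE n d r)

/-- the border rank of a tensor. -/
def brk (n d : ℕ) (F : MvPolynomial (Fin d × Fin n) ℂ) : ℕ :=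
  sInf {r | brkLE n d F r}

/-- polynomials that are sums of `r` `d`-th powers of linear forms. -/
def srankLE (n d r : ℕ) : Set (MvPolynomial (Fin n) ℂ) :=
  {p | ∃ c : Fin r → Fin n → ℂ, p = ∑ s : Fin r, (∑ j : Fin n, C (c s j) * X j) ^ d}

/-- `p` has symmetric border rank at most `r`. -/
def sbrkLE (n d : ℕ) (p : MvPolynomial (Fin n) ℂ) (r : ℕ) : Prop :=
  (fun m => coeff m p) ∈ closure ((fun q => fun m => coeff m q) '' srankLE n d r)

/-- the symmetric border rank of a degree-`d` form. -/
def sbrk (n d : ℕ) (p : MvPolynomial (Fin n) ℂ) : ℕ :=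
  sInf {r | sbrkLE n d p r}

/-- `F` is a symmetric tensor: invariant under the permutations of the `d` factors. -/
def IsSymm (n d : ℕ) (F : MvPolynomial (Fin d × Fin n) ℂ) : Prop :=
  ∀ τ : Equiv.Perm (Fin d), rename (Prod.map τ id) F = F

/-- the degree-`d` polynomial `p_F` corresponding to a symmetric tensor `F`, obtained
by identifying all the rows of variables (`x_{i,j} ↦ y_j`); `F` is the polarization
of `p_F`. -/
def pF (n d : ℕ) (F : MvPolynomial (Fin d × Fin n) ℂ) : MvPolynomial (Fin n) ℂ :=
  rename Prod.snd F

/-- `F` is concise: the contraction `(ℂ^n)^* → (ℂ^n)^{⊗(d-1)}` of the first tensor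
factor, `w ↦ F(x_{1,j} := w_j)`, is injective. -/
def Concise (n d : ℕ) (F : MvPolynomial (Fin d × Fin n) ℂ) : Prop :=
  Function.Injective fun w : Fin n → ℂ =>
    aeval (fun p : Fin d × Fin n => if (p.1 : ℕ) = 0 then C (w p.2) else X p) F

/-- the ideal `∑_{0<u<𝟏} S·Ann(F)_u` generated by the components `Ann(F)_u`,
`0 < u < 𝟏` (componentwise). -/
def midIdeal (n d : ℕ) (F : MvPolynomial (Fin d × Fin n) ℂ) :
    Ideal (MvPolynomial (Fin d × Fin n) ℂ) :=
  Ideal.span (⋃ u ∈ {u : Fin d → ℕ | 0 < u ∧ u < fun _ => 1},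
    ((ann F ⊓ Scomp n d u : Submodule ℂ (MvPolynomial (Fin d × Fin n) ℂ)) :
      Set (MvPolynomial (Fin d × Fin n) ℂ)))

/-- `F` is a *sharp* tensor:
(1) `Ann(F)` has exactly `n-1` minimal generators of multidegree `𝟏`;
(2) `dim (S/Ann F)_u = n` for all `0 < u < 𝟏`;
(3) `dim (S/(Ann(F)_{e_i+e_j}))_{s e_i + e_j} = n` for all `i ≠ j`, `1 ≤ s ≤ d-1`. -/
def Sharp (n d : ℕ) (F : MvPolynomial (Fin d × Fin n) ℂ) : Prop :=
  (finrank ℂ (ann F ⊓ Scomp n d fun _ => 1 :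
        Submodule ℂ (MvPolynomial (Fin d × Fin n) ℂ)) -
      finrank ℂ (restrictScalars ℂ (midIdeal n d F) ⊓ Scomp n d fun _ => 1 :
        Submodule ℂ (MvPolynomial (Fin d × Fin n) ℂ)) = n - 1) ∧
  (∀ u : Fin d → ℕ, 0 < u → u < (fun _ => 1) →
    finrank ℂ (Scomp n d u ⧸ Submodule.comap (Scomp n d u).subtype (ann F)) = n) ∧
  (∀ i j : Fin d, i ≠ j → ∀ s : ℕ, 1 ≤ s → s ≤ d - 1 →
    finrank ℂ (Scomp n d (Pi.single i s + Pi.single j 1) ⧸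
      Submodule.comap (Scomp n d (Pi.single i s + Pi.single j 1)).subtype
        (restrictScalars ℂ (Ideal.span
          ((ann F ⊓ Scomp n d (Pi.single i 1 + Pi.single j 1) :
            Submodule ℂ (MvPolynomial (Fin d × Fin n) ℂ)) :
            Set (MvPolynomial (Fin d × Fin n) ℂ))))) = n)

/-! ### Auxiliary material for `stmt_0` -/

section Aux

open Finset

/-- The multilinear exponent associated to a function `f : Fin d → Fin n`. -/
def Ef {d n : ℕ} (f : Fin d → Fin n) : (Fin d × Fin n) →₀ ℕ :=
  Finsupp.equivFunOnFinite.symm fun p : Fin d × Fin n => if f p.1 = p.2 then 1 else 0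

lemma Ef_apply {d n : ℕ} (f : Fin d → Fin n) (p : Fin d × Fin n) :
    Ef f p = if f p.1 = p.2 then 1 else 0 := rfl

lemma Ef_injective {d n : ℕ} : Function.Injective (Ef (d := d) (n := n)) := by
  intro f g h
  funext i
  by_contra hne
  have := congrArg (fun a : (Fin d × Fin n) →₀ ℕ => a (i, f i)) h
  simp only [Ef_apply] at this
  rw [if_neg (fun hh : g i = f i => hne hh.symm)] at this
  simp at this

/-- degree of an exponent -/
def degE {σ : Type*} (a : σ →₀ ℕ) : ℕ := a.sum fun _ k => k

lemma degE_mapDomain {σ τ : Type*} (m : σ → τ) (a : σ →₀ ℕ) :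
    degE (Finsupp.mapDomain m a) = degE a :=
  Finsupp.sum_mapDomain_index (fun _ => rfl) (fun _ _ _ => rfl)

lemma eq_of_le_on_support_of_degE {σ : Type*} {γ b : σ →₀ ℕ}
    (hle : ∀ j ∈ γ.support, γ j ≤ b j) (hdeg : degE b = degE γ) : b = γ := by
  have hle' : γ ≤ b := (Finsupp.le_iff γ b).2 hle
  have h2 : γ + (b - γ) = b := add_tsub_cancel_of_le hle'
  have h3 : degE γ + degE (b - γ) = degE b := by
    conv_rhs => rw [← h2]
    exact (Finsupp.sum_add_index' (h := fun _ k => k) (fun _ => rfl) (fun _ _ _ => rfl)).symm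
  have h4 : degE (b - γ) = 0 := by omega
  have h5 : b - γ = 0 := by
    ext j
    by_contra hj
    have hjs : j ∈ (b - γ).support := Finsupp.mem_support_iff.2 hj
    have : (b - γ) j = 0 :=
      Finset.sum_eq_zero_iff.mp h4 j hjs
    exact hj this
  have := congrArg (γ + ·) h5
  simp only [h2, add_zero] at this
  exact this

lemma apolar_eq_sum {σ : Type*} (F ψ : MvPolynomial σ ℂ) :
    apolar F ψ = (AddMonoidAlgebra.coeff ψ).sum fun a c => c • diffMon a F := by
  simp [apolar, Finsupp.lsum_apply, LinearMap.toSpanSingleton_apply]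
  rfl

lemma diffMon_homogeneous {σ : Type*} {N : ℕ} {p : MvPolynomial σ ℂ}
    (hp : ∀ b ∈ p.support, degE b = N) (γ : σ →₀ ℕ) (hγ : degE γ = N) :
    diffMon γ p = (p.coeff γ * ∏ j ∈ γ.support, ((γ j).factorial : ℂ)) • 1 := by
  unfold diffMon
  rw [Finset.sum_eq_single γ]
  · simp [Nat.descFactorial_self, tsub_self, MvPolynomial.smul_eq_C_mul]
  · intro b hb hne
    have hnall : ¬ ∀ j ∈ γ.support, γ j ≤ b j := fun hall =>
      hne (eq_of_le_on_support_of_degE hall (by rw [hp b hb, hγ]))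
    push_neg at hnall
    obtain ⟨j, hjs, hjlt⟩ := hnall
    have : ((b j).descFactorial (γ j) : ℂ) = 0 := by
      rw [Nat.descFactorial_eq_zero_iff_lt.2 hjlt, Nat.cast_zero]
    rw [Finset.prod_eq_zero hjs this, mul_zero, zero_smul]
  · intro hγs
    rw [MvPolynomial.notMem_support_iff.mp hγs, zero_mul, zero_smul]

lemma apolar_homogeneous {σ : Type*} {N : ℕ} (p ψ : MvPolynomial σ ℂ)
    (hp : ∀ b ∈ p.support, degE b = N) (hψ : ∀ γ ∈ ψ.support, degE γ = N) :
    apolar p ψ =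
      C ((AddMonoidAlgebra.coeff ψ).sum fun γ c => c * (p.coeff γ * ∏ j ∈ γ.support, ((γ j).factorial : ℂ))) := by
  rw [apolar_eq_sum, Finsupp.sum, Finsupp.sum, map_sum]
  refine Finset.sum_congr rfl fun γ hγ => ?_
  rw [diffMon_homogeneous hp γ (hψ γ hγ), smul_smul, MvPolynomial.smul_eq_C_mul, mul_one]

/-- permutations transporting `f` to `g` correspond to families of fiber bijections. -/
def permFiberEquiv {d n : ℕ} (f g : Fin d → Fin n) :
    {τ : Equiv.Perm (Fin d) // f ∘ τ = g} ≃
      ∀ j : Fin n, {i // g i = j} ≃ {i // f i = j} where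
  toFun τh j := Equiv.subtypeEquiv τh.1 fun i => by
    rw [← congrFun τh.2 i]; exact Iff.rfl
  invFun e := ⟨Equiv.ofFiberEquiv e, funext fun i => Equiv.ofFiberEquiv_map e i⟩
  left_inv τh := by
    apply Subtype.ext
    apply Equiv.ext
    intro i
    simp [Equiv.ofFiberEquiv]
  right_inv e := by
    funext j
    apply Equiv.ext
    rintro ⟨i, hi⟩
    apply Subtype.ext
    subst hi
    simp [Equiv.ofFiberEquiv]
    rfl

lemma card_perm_transport {d n : ℕ} (f g : Fin d → Fin n) :
    (Finset.univ.filter fun τ : Equiv.Perm (Fin d) => f ∘ τ = g).card =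
    if (fun j => (Finset.univ.filter fun i => f i = j).card) =
        (fun j => (Finset.univ.filter fun i => g i = j).card)
    then ∏ j : Fin n, ((Finset.univ.filter fun i => f i = j).card).factorial else 0 := by
  rw [← Fintype.card_subtype, Fintype.card_congr (permFiberEquiv f g), Fintype.card_pi]
  split_ifs with h
  · refine Finset.prod_congr rfl fun j _ => ?_
    have hcard : Fintype.card {i // g i = j} = Fintype.card {i // f i = j} := by
      rw [Fintype.card_subtype, Fintype.card_subtype, ← congrFun h j]
    rw [Fintype.card_equiv (Fintype.equivOfCardEq hcard), Fintype.card_subtype,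
      ← congrFun h j]
  · obtain ⟨j, hj⟩ := Function.ne_iff.mp h
    refine Finset.prod_eq_zero (Finset.mem_univ j) ?_
    refine Fintype.card_eq_zero_iff.mpr ⟨fun e => hj ?_⟩
    have := Fintype.card_congr e
    rw [Fintype.card_subtype, Fintype.card_subtype] at this
    exact this.symm

lemma rows_of_mem_Scomp {n d : ℕ} {ψ : MvPolynomial (Fin d × Fin n) ℂ}
    (hψ : ψ ∈ Scomp n d fun _ => 1) {a : (Fin d × Fin n) →₀ ℕ}
    (ha : a ∈ ψ.support) (i : Fin d) : ∑ j : Fin n, a (i, j) = 1 := by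
  have hψ' : MvPolynomial.IsWeightedHomogeneous
      (fun p : Fin d × Fin n => Pi.single p.1 (1 : ℕ)) ψ (fun _ => 1) := hψ
  have h := hψ' (MvPolynomial.mem_support_iff.mp ha)
  have h3 := congrFun h i
  simp only [Finsupp.weight_apply, Finsupp.sum, Finset.sum_apply, Pi.smul_apply,
    Pi.single_apply, smul_eq_mul, mul_ite, mul_one, mul_zero] at h3
  calc ∑ j : Fin n, a (i, j)
      = ∑ i' : Fin d, if i = i' then ∑ j : Fin n, a (i', j) else 0 := by
        rw [Finset.sum_ite_eq]; simp
    _ = ∑ p : Fin d × Fin n, (if i = p.1 then a p else 0) := by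
        rw [Fintype.sum_prod_type]
        exact Finset.sum_congr rfl fun i' _ => by split_ifs <;> simp
    _ = ∑ p ∈ a.support, (if i = p.1 then a p else 0) :=
        (Finset.sum_subset (Finset.subset_univ a.support)
          (fun p _ hp => by rw [Finsupp.notMem_support_iff.mp hp, ite_self])).symm
    _ = 1 := h3

lemma exists_Ef {n d : ℕ} {a : (Fin d × Fin n) →₀ ℕ}
    (h : ∀ i, ∑ j : Fin n, a (i, j) = 1) : ∃ f : Fin d → Fin n, a = Ef f := by
  have key : ∀ i : Fin d, ∃ j, a (i, j) = 1 ∧ ∀ j', j' ≠ j → a (i, j') = 0 := by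
    intro i
    have hsum := h i
    have hj : ∃ j, a (i, j) ≠ 0 := by
      by_contra h'
      push_neg at h'
      rw [Finset.sum_eq_zero (fun j _ => h' j)] at hsum
      exact one_ne_zero hsum.symm
    obtain ⟨j, hj⟩ := hj
    have h1 : a (i, j) = 1 :=
      le_antisymm
        (hsum ▸ Finset.single_le_sum (f := fun j => a (i, j))
          (fun _ _ => Nat.zero_le _) (Finset.mem_univ j))
        (Nat.one_le_iff_ne_zero.2 hj)
    refine ⟨j, h1, fun j' hj' => ?_⟩
    have h2 : a (i, j) + ∑ j'' ∈ Finset.univ.erase j, a (i, j'') = 1 :=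
      (Finset.add_sum_erase Finset.univ (fun j'' => a (i, j'')) (Finset.mem_univ j)).trans hsum
    have h3 : ∑ j'' ∈ Finset.univ.erase j, a (i, j'') = 0 := by omega
    exact Finset.sum_eq_zero_iff.mp h3 j' (Finset.mem_erase.2 ⟨hj', Finset.mem_univ _⟩)
  choose f h1 h2 using key
  refine ⟨f, ?_⟩
  ext p
  obtain ⟨i, j⟩ := p
  rw [Ef_apply]
  by_cases hc : f i = j
  · rw [if_pos hc, ← hc]; exact h1 i
  · rw [if_neg hc]; exact h2 i j fun hh => hc hh.symm

lemma degE_Ef {n d : ℕ} (f : Fin d → Fin n) : degE (Ef f) = d := by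
  rw [degE, Finsupp.sum_fintype _ _ (fun _ => rfl), Fintype.sum_prod_type]
  simp [Ef_apply]

lemma mapDomain_snd_Ef {n d : ℕ} (f : Fin d → Fin n) (j : Fin n) :
    Finsupp.mapDomain Prod.snd (Ef f) j = (Finset.univ.filter fun i => f i = j).card := by
  rw [Finsupp.mapDomain, Finsupp.sum_fintype _ _ (fun _ => by simp),
    Finsupp.finset_sum_apply, Finset.card_filter, Fintype.sum_prod_type]
  refine Finset.sum_congr rfl fun i _ => ?_
  simp only [Finsupp.single_apply, Ef_apply]
  rw [Finset.sum_ite_eq' Finset.univ j fun j' => if f i = j' then 1 else 0,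
    if_pos (Finset.mem_univ j)]

lemma mapDomain_perm_Ef {n d : ℕ} (τ : Equiv.Perm (Fin d)) (f : Fin d → Fin n) :
    Finsupp.mapDomain (Prod.map (⇑τ) id) (Ef f) = Ef (f ∘ ⇑τ.symm) := by
  have hinj : Function.Injective (Prod.map (⇑τ) (id : Fin n → Fin n)) :=
    τ.injective.prodMap Function.injective_id
  ext p
  obtain ⟨i, j⟩ := p
  have hp : (i, j) = Prod.map (⇑τ) id (τ.symm i, j) := by simp
  rw [hp, Finsupp.mapDomain_apply hinj]
  simp [Ef_apply]

lemma pair_count {n d : ℕ} (f g : Fin d → Fin n) :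
    (if Finsupp.mapDomain Prod.snd (Ef g) = Finsupp.mapDomain Prod.snd (Ef f)
      then ∏ j : Fin n, (((Finset.univ.filter fun i => f i = j).card).factorial : ℂ) else 0)
    = ((Finset.univ.filter fun τ : Equiv.Perm (Fin d) =>
        Finsupp.mapDomain (Prod.map (⇑τ) id) (Ef f) = Ef g).card : ℂ) := by
  have hcond : (Finsupp.mapDomain Prod.snd (Ef g) = Finsupp.mapDomain Prod.snd (Ef f))
      ↔ ((fun j => (Finset.univ.filter fun i => g i = j).card) =
         (fun j => (Finset.univ.filter fun i => f i = j).card)) := by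
    constructor
    · intro h; funext j; rw [← mapDomain_snd_Ef, ← mapDomain_snd_Ef, h]
    · intro h; ext j; rw [mapDomain_snd_Ef, mapDomain_snd_Ef, congrFun h j]
  have hset : (Finset.univ.filter fun τ : Equiv.Perm (Fin d) =>
        Finsupp.mapDomain (Prod.map (⇑τ) id) (Ef f) = Ef g) =
      Finset.univ.filter fun τ : Equiv.Perm (Fin d) => g ∘ τ = f := by
    refine Finset.filter_congr fun τ _ => ?_
    rw [mapDomain_perm_Ef]
    constructor
    · intro h
      have h2 : f ∘ ⇑τ.symm = g := Ef_injective h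
      funext i
      have h3 := congrFun h2 (τ i)
      simp only [Function.comp_apply, Equiv.symm_apply_apply] at h3
      simpa using h3.symm
    · intro h
      have h2 : f ∘ ⇑τ.symm = g := by
        funext i
        have h3 := congrFun h (τ.symm i)
        simp only [Function.comp_apply, Equiv.apply_symm_apply] at h3
        simpa using h3.symm
      rw [h2]
  rw [hset, card_perm_transport g f, if_congr hcond rfl rfl]
  split_ifs with h
  · rw [Nat.cast_prod]
    exact Finset.prod_congr rfl fun j _ => by rw [congrFun h j]
  · simp

lemma weight_one_degE {σ : Type*} (γ : σ →₀ ℕ) :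
    (Finsupp.weight (1 : σ → ℕ)) γ = degE γ := by
  rw [Finsupp.weight_apply, degE]
  refine Finsupp.sum_congr fun j _ => ?_
  simp

lemma claimP {n d : ℕ} {F : MvPolynomial (Fin d × Fin n) ℂ} (hsym : IsSymm n d F)
    (hFrow : ∀ b ∈ F.support, ∀ i : Fin d, ∑ j : Fin n, b (i, j) = 1)
    (f : Fin d → Fin n) :
    (rename Prod.snd F).coeff (Finsupp.mapDomain Prod.snd (Ef f)) *
      (∏ j ∈ (Finsupp.mapDomain Prod.snd (Ef f)).support,
        (((Finsupp.mapDomain Prod.snd (Ef f)) j).factorial : ℂ))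
    = (d.factorial : ℂ) * F.coeff (Ef f) := by
  set γ0 := Finsupp.mapDomain Prod.snd (Ef f) with hγ0
  have hsymcoeff : ∀ τ : Equiv.Perm (Fin d),
      F.coeff (Finsupp.mapDomain (Prod.map (⇑τ) id) (Ef f)) = F.coeff (Ef f) := by
    intro τ
    conv_lhs => rw [← hsym τ]
    exact MvPolynomial.coeff_rename_mapDomain _
      (τ.injective.prodMap Function.injective_id) F (Ef f)
  have hWuniv : (∏ j ∈ γ0.support, ((γ0 j).factorial : ℂ)) =
      ∏ j : Fin n, ((γ0 j).factorial : ℂ) :=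
    Finset.prod_subset (Finset.subset_univ _) fun j _ hj => by
      rw [Finsupp.notMem_support_iff.mp hj]; simp
  have hcoeff : (rename Prod.snd F).coeff γ0 =
      ∑ b ∈ F.support, (if Finsupp.mapDomain Prod.snd b = γ0 then F.coeff b else 0) := by
    have hre : AddMonoidAlgebra.coeff (rename Prod.snd F) =
        Finsupp.mapDomain (Finsupp.mapDomain Prod.snd) (AddMonoidAlgebra.coeff F) := rfl
    show (AddMonoidAlgebra.coeff (rename Prod.snd F)) γ0 = _
    rw [hre]
    rw [Finsupp.mapDomain, Finsupp.sum_apply, Finsupp.sum]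
    exact Finset.sum_congr rfl fun b _ => Finsupp.single_apply
  have hb : ∀ b ∈ F.support,
      (if Finsupp.mapDomain Prod.snd b = γ0 then (∏ j : Fin n, ((γ0 j).factorial : ℂ)) else 0)
      = ((Finset.univ.filter fun τ : Equiv.Perm (Fin d) =>
          Finsupp.mapDomain (Prod.map (⇑τ) id) (Ef f) = b).card : ℂ) := by
    intro b hbs
    obtain ⟨g, rfl⟩ := exists_Ef fun i => hFrow b hbs i
    have hWf : (∏ j : Fin n, ((γ0 j).factorial : ℂ)) =
        ∏ j : Fin n, (((Finset.univ.filter fun i => f i = j).card).factorial : ℂ) :=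
      Finset.prod_congr rfl fun j _ => by rw [hγ0, mapDomain_snd_Ef]
    rw [hWf]
    exact pair_count f g
  have hinner : ∀ x : (Fin d × Fin n) →₀ ℕ,
      (∑ b ∈ F.support, if x = b then F.coeff b else 0) = F.coeff x := by
    intro x
    rw [Finset.sum_ite_eq]
    split_ifs with hx
    · rfl
    · exact (MvPolynomial.notMem_support_iff.mp hx).symm
  calc (rename Prod.snd F).coeff γ0 * (∏ j ∈ γ0.support, ((γ0 j).factorial : ℂ))
      = ∑ b ∈ F.support, (if Finsupp.mapDomain Prod.snd b = γ0 then F.coeff b else 0) *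
          (∏ j : Fin n, ((γ0 j).factorial : ℂ)) := by
        rw [hcoeff, hWuniv, Finset.sum_mul]
    _ = ∑ b ∈ F.support, F.coeff b *
          (if Finsupp.mapDomain Prod.snd b = γ0 then (∏ j : Fin n, ((γ0 j).factorial : ℂ))
            else 0) := by
        refine Finset.sum_congr rfl fun b _ => ?_
        split_ifs <;> ring
    _ = ∑ b ∈ F.support, F.coeff b *
          ((Finset.univ.filter fun τ : Equiv.Perm (Fin d) =>
            Finsupp.mapDomain (Prod.map (⇑τ) id) (Ef f) = b).card : ℂ) := by
        refine Finset.sum_congr rfl fun b hbs => ?_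
        rw [hb b hbs]
    _ = ∑ b ∈ F.support, ∑ τ : Equiv.Perm (Fin d),
          (if Finsupp.mapDomain (Prod.map (⇑τ) id) (Ef f) = b then F.coeff b else 0) := by
        refine Finset.sum_congr rfl fun b _ => ?_
        rw [Finset.card_filter, Nat.cast_sum, Finset.mul_sum]
        refine Finset.sum_congr rfl fun τ _ => ?_
        split_ifs <;> simp
    _ = ∑ τ : Equiv.Perm (Fin d), ∑ b ∈ F.support,
          (if Finsupp.mapDomain (Prod.map (⇑τ) id) (Ef f) = b then F.coeff b else 0) :=
        Finset.sum_comm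
    _ = ∑ τ : Equiv.Perm (Fin d), F.coeff (Finsupp.mapDomain (Prod.map (⇑τ) id) (Ef f)) :=
        Finset.sum_congr rfl fun τ _ => hinner _
    _ = ∑ _τ : Equiv.Perm (Fin d), F.coeff (Ef f) :=
        Finset.sum_congr rfl fun τ _ => hsymcoeff τ
    _ = (d.factorial : ℂ) * F.coeff (Ef f) := by
        rw [Finset.sum_const, Finset.card_univ, Fintype.card_perm, Fintype.card_fin,
          nsmul_eq_mul]

end Aux

/-- Lemma 3.3: for a symmetric tensor `F`,
`π(Ann(F)_𝟏) ⊆ Ann(p_F)_d`. -/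
theorem stmt_0 (n d : ℕ) (hn : 0 < n) (hd : 0 < d)
    (F : MvPolynomial (Fin d × Fin n) ℂ)
    (hF : F ∈ Scomp n d fun _ => 1) (hsym : IsSymm n d F) :
    Submodule.map (piL n d) (ann F ⊓ Scomp n d fun _ => 1) ≤
      ann (pF n d F) ⊓ Vcomp n d := by
  rintro q ⟨ψ, ⟨hψann, hψcomp⟩, rfl⟩
  have hpiL : piL n d ψ = rename Prod.snd ψ := by rw [rename_eq_aeval]; rfl
  have hFrow : ∀ b ∈ F.support, ∀ i : Fin d, ∑ j : Fin n, b (i, j) = 1 :=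
    fun b hb i => rows_of_mem_Scomp hF hb i
  have hψrow : ∀ a ∈ ψ.support, ∀ i : Fin d, ∑ j : Fin n, a (i, j) = 1 :=
    fun a ha i => rows_of_mem_Scomp hψcomp ha i
  have hFdeg : ∀ b ∈ F.support, degE b = d := by
    intro b hb
    obtain ⟨g, hg⟩ := exists_Ef fun i => hFrow b hb i
    rw [hg, degE_Ef]
  have hψdeg : ∀ a ∈ ψ.support, degE a = d := by
    intro a ha
    obtain ⟨g, hg⟩ := exists_Ef fun i => hψrow a ha i
    rw [hg, degE_Ef]
  have hpFdeg : ∀ γ ∈ (pF n d F).support, degE γ = d := by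
    intro γ hγ
    rw [pF] at hγ
    obtain ⟨b, hb1, hb2⟩ := MvPolynomial.coeff_rename_ne_zero _ _ _
      (MvPolynomial.mem_support_iff.mp hγ)
    rw [← hb1, degE_mapDomain]
    exact hFdeg b (MvPolynomial.mem_support_iff.2 hb2)
  have hπψdeg : ∀ γ ∈ (rename Prod.snd ψ).support, degE γ = d := by
    intro γ hγ
    obtain ⟨a, ha1, ha2⟩ := MvPolynomial.coeff_rename_ne_zero _ _ _
      (MvPolynomial.mem_support_iff.mp hγ)
    rw [← ha1, degE_mapDomain]
    exact hψdeg a (MvPolynomial.mem_support_iff.2 ha2)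
  -- the tensor-side pairing vanishes
  have h0 : apolar F ψ = 0 := hψann
  rw [apolar_homogeneous (N := d) F ψ hFdeg hψdeg] at h0
  have hBS : ((AddMonoidAlgebra.coeff ψ).sum fun a c =>
      c * (F.coeff a * ∏ j ∈ a.support, ((a j).factorial : ℂ))) = 0 :=
    MvPolynomial.C_eq_zero.mp h0
  have hW1 : ∀ a ∈ ψ.support, (∏ j ∈ a.support, ((a j).factorial : ℂ)) = 1 := by
    intro a ha
    obtain ⟨g, hg⟩ := exists_Ef fun i => hψrow a ha i
    refine Finset.prod_eq_one fun p _ => ?_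
    rw [hg, Ef_apply]
    split_ifs <;> simp
  have hBS' : ((AddMonoidAlgebra.coeff ψ).sum fun a c => c * F.coeff a) = 0 := by
    rw [← hBS]
    refine Finsupp.sum_congr fun a ha => ?_
    rw [hW1 a ha, mul_one]
  rw [hpiL]
  constructor
  · -- membership in `ann (pF n d F)`
    show apolar (pF n d F) (rename Prod.snd ψ) = 0
    rw [apolar_homogeneous (N := d) (pF n d F) (rename Prod.snd ψ) hpFdeg hπψdeg]
    rw [show ((0 : MvPolynomial (Fin n) ℂ)) = C 0 from (map_zero C).symm]
    congr 1
    have hren : AddMonoidAlgebra.coeff (rename (Prod.snd : Fin d × Fin n → Fin n) ψ) =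
        Finsupp.mapDomain (Finsupp.mapDomain Prod.snd) (AddMonoidAlgebra.coeff ψ) := rfl
    rw [hren, Finsupp.sum_mapDomain_index (fun γ => by rw [zero_mul])
      (fun γ c₁ c₂ => by rw [add_mul])]
    calc ((AddMonoidAlgebra.coeff ψ).sum fun a c => c * ((pF n d F).coeff (Finsupp.mapDomain Prod.snd a) *
            ∏ j ∈ (Finsupp.mapDomain Prod.snd a).support,
              (((Finsupp.mapDomain Prod.snd a) j).factorial : ℂ)))
        = (AddMonoidAlgebra.coeff ψ).sum fun a c => c * ((d.factorial : ℂ) * F.coeff a) := by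
          refine Finsupp.sum_congr fun a ha => ?_
          obtain ⟨g, hg⟩ := exists_Ef fun i => hψrow a ha i
          rw [hg]
          rw [show (pF n d F) = rename Prod.snd F from rfl]
          rw [claimP hsym hFrow g]
      _ = (d.factorial : ℂ) * (AddMonoidAlgebra.coeff ψ).sum fun a c => c * F.coeff a := by
          rw [Finsupp.mul_sum]
          exact Finsupp.sum_congr fun a _ => by ring
      _ = 0 := by rw [hBS', mul_zero]
  · -- membership in `Vcomp n d`
    show MvPolynomial.IsHomogeneous (rename Prod.snd ψ) d
    intro γ hγ
    rw [weight_one_degE]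
    exact hπψdeg γ (MvPolynomial.mem_support_iff.2 hγ)

end BorderComon
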